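/- Let κ ≥ 1, let ε ≤ 2/κ², and consider a partition V₁ ∪̇ ··· ∪̇ V_k refining a partition U₁ ∪̇ ··· ∪̇ U_κ such that each U_i contains exactly k/κ of the parts V_j. If a set B of pairs {j, j'} ⊆ [k] of 'bad' pairs has size at most ε·C(k,2), then there exist indices j₁,…,j_κ with V_{j_i} ⊆ U_i for each i and no pair {j_i, j_{i'}}, i ≠ i', belonging to B. -/

import Mathlib

/-- Let `κ ≥ 1`, `ε ≤ 2/κ²`, and suppose each of the `κ` classes
of a partition (recorded by `part : Fin k → Fin κ`, assigning to each refined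
part `V_j` the original part `U_i` containing it) contains exactly `k/κ` of the
`k` refined parts. If a set `B` of (unordered, non-diagonal) 'bad' pairs of
`[k]` has size at most `ε·C(k,2)`, then one can pick one index in each class so
that no two picked indices form a bad pair. -/
theorem stmt17 (κ k : ℕ) (hκ : 1 ≤ κ) (hk : 0 < k) (ε : ℝ) (hε : ε ≤ 2 / κ ^ 2)
    (part : Fin k → Fin κ)
    (hpart : ∀ i : Fin κ,
      ((Finset.univ.filter fun j : Fin k => part j = i).card) * κ = k)
    (B : Finset (Sym2 (Fin k))) (hdiag : ∀ p ∈ B, ¬ p.IsDiag)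
    (hB : (B.card : ℝ) ≤ ε * (k.choose 2)) :
    ∃ j : Fin κ → Fin k, (∀ i, part (j i) = i) ∧
      ∀ i i' : Fin κ, i ≠ i' → Sym2.mk (j i) (j i') ∉ B := by
  classical
  rcases eq_or_lt_of_le hκ with h1 | h2
  · -- κ = 1 : any choice works, pairs i ≠ i' don't exist
    subst h1
    refine ⟨fun _ => ⟨0, hk⟩, fun i => Subsingleton.elim _ _, fun i i' hne => (hne (Subsingleton.elim _ _)).elim⟩
  have hκ2 : 2 ≤ κ := h2
  have hκpos : 0 < κ := by omega
  set m := k / κ with hmdef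
  have hm : ∀ i : Fin κ, (Finset.univ.filter fun j : Fin k => part j = i).card = m := by
    intro i
    exact (Nat.div_eq_of_eq_mul_left hκpos (hpart i).symm).symm
  have hmκ : m * κ = k := by
    rw [← hm ⟨0, hκpos⟩]; exact hpart _
  have hmpos : 0 < m := by
    rcases Nat.eq_zero_or_pos m with h | h
    · rw [h, zero_mul] at hmκ; omega
    · exact h
  set t : Fin κ → Finset (Fin k) := fun i => Finset.univ.filter fun j : Fin k => part j = i with ht
  set S := Fintype.piFinset t with hS
  have hmemS : ∀ f ∈ S, ∀ i, part (f i) = i := by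
    intro f hf i
    have := Fintype.mem_piFinset.mp hf i
    simpa [ht] using this
  have hcardS : S.card = m ^ κ := by
    rw [hS, Fintype.card_piFinset]
    simp [ht, hm, Finset.prod_const]
  set hit : Sym2 (Fin k) → Finset (Fin κ → Fin k) :=
    fun p => S.filter (fun f => ∃ i i' : Fin κ, i ≠ i' ∧ Sym2.mk (f i) (f i') = p) with hhit
  have key : ∀ p ∈ B, (hit p).card ≤ m ^ (κ - 2) := by
    intro p hp
    induction p using Sym2.ind with
    | _ a b =>
      have hab : a ≠ b := by
        intro h; exact hdiag _ hp (by simp [h])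
      by_cases hpab : part a = part b
      · have : hit (Sym2.mk a b) = ∅ := by
          rw [Finset.eq_empty_iff_forall_notMem]
          intro f hf
          rw [hhit, Finset.mem_filter] at hf
          obtain ⟨hfS, i, i', hne, heq⟩ := hf
          have hpi := hmemS f hfS
          rcases Sym2.eq_iff.mp heq with ⟨e1, e2⟩ | ⟨e1, e2⟩
          · exact hne (by rw [← hpi i, ← hpi i', e1, e2, hpab])
          · exact hne (by rw [← hpi i, ← hpi i', e1, e2, hpab])
        simp [this]
      · -- distinct parts
        set t' := Function.update (Function.update t (part a) {a}) (part b) {b} with ht'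
        have hsub : hit (Sym2.mk a b) ⊆ Fintype.piFinset t' := by
          intro f hf
          rw [hhit, Finset.mem_filter] at hf
          obtain ⟨hfS, i, i', hne, heq⟩ := hf
          have hpi := hmemS f hfS
          have key2 : ∀ (x : Fin k) (i0 : Fin κ), f i0 = x → f (part x) = x := by
            intro x i0 he
            have hx : part x = i0 := by rw [← he]; exact hpi i0
            rw [hx, he]
          have hfa : f (part a) = a ∧ f (part b) = b := by
            rcases Sym2.eq_iff.mp heq with ⟨e1, e2⟩ | ⟨e1, e2⟩
            · exact ⟨key2 a i e1, key2 b i' e2⟩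
            · exact ⟨key2 a i' e2, key2 b i e1⟩
          rw [Fintype.mem_piFinset]
          intro i0
          by_cases h1 : i0 = part b
          · subst h1
            rw [ht', Function.update_self]
            simp [hfa.2]
          · by_cases h2 : i0 = part a
            · subst h2
              rw [ht', Function.update_of_ne hpab, Function.update_self]
              simp [hfa.1]
            · rw [ht', Function.update_of_ne h1, Function.update_of_ne h2]
              exact Fintype.mem_piFinset.mp hfS i0
        have hcard' : (Fintype.piFinset t').card = m ^ (κ - 2) := by
          rw [Fintype.card_piFinset]
          have hsub2 : ({part a, part b} : Finset (Fin κ)) ⊆ Finset.univ := Finset.subset_univ _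
          rw [← Finset.prod_sdiff hsub2]
          have e1 : ∏ i ∈ ({part a, part b} : Finset (Fin κ)), (t' i).card = 1 := by
            rw [Finset.prod_pair hpab]
            have ea : t' (part a) = {a} := by
              rw [ht', Function.update_of_ne hpab, Function.update_self]
            have eb : t' (part b) = {b} := by
              rw [ht', Function.update_self]
            rw [ea, eb]; simp
          have e2 : ∏ i ∈ Finset.univ \ ({part a, part b} : Finset (Fin κ)), (t' i).card
              = m ^ (κ - 2) := by
            rw [Finset.prod_congr rfl (fun i hi => ?_), Finset.prod_const]
            · congr 1
              rw [Finset.card_sdiff_of_subset hsub2, Finset.card_pair hpab, Finset.card_univ,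
                Fintype.card_fin]
            · simp only [Finset.mem_sdiff, Finset.mem_insert, Finset.mem_singleton] at hi
              push_neg at hi
              rw [ht', Function.update_of_ne hi.2.2, Function.update_of_ne hi.2.1, hm]
          rw [e1, e2, mul_one]
        calc (hit (Sym2.mk a b)).card ≤ (Fintype.piFinset t').card := Finset.card_le_card hsub
          _ = m ^ (κ - 2) := hcard'
  -- count bad pairs
  have hBlt : B.card < m ^ 2 := by
    have hκR : (0 : ℝ) < (κ : ℝ) := by exact_mod_cast hκpos
    have hkR : (0 : ℝ) < (k : ℝ) := by exact_mod_cast hk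
    have hch : ((k.choose 2 : ℕ) : ℝ) = k * (k - 1) / 2 := Nat.cast_choose_two (K := ℝ) k
    have h1 : (B.card : ℝ) ≤ (2 / κ ^ 2) * (k * (k - 1) / 2) := by
      calc (B.card : ℝ) ≤ ε * (k.choose 2) := hB
        _ ≤ (2 / κ ^ 2) * (k.choose 2) :=
          mul_le_mul_of_nonneg_right hε (Nat.cast_nonneg _)
        _ = (2 / κ ^ 2) * (k * (k - 1) / 2) := by rw [hch]
    have hmκR : (m : ℝ) * κ = k := by exact_mod_cast hmκ
    have h2 : (B.card : ℝ) < (m : ℝ) ^ 2 := by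
      have hκ2R : (0 : ℝ) < (κ : ℝ) ^ 2 := by positivity
      have h3 : (B.card : ℝ) * κ ^ 2 ≤ k * (k - 1) := by
        calc (B.card : ℝ) * κ ^ 2 ≤ (2 / κ ^ 2 * (k * (k - 1) / 2)) * κ ^ 2 :=
              mul_le_mul_of_nonneg_right h1 hκ2R.le
          _ = k * (k - 1) := by field_simp
      have h4 : (m : ℝ) ^ 2 * κ ^ 2 = k ^ 2 := by rw [← hmκR]; ring
      nlinarith [h3, h4, hkR, hκ2R]
    exact_mod_cast h2
  have hbigsub : B.biUnion hit ⊆ S := by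
    intro f hf
    obtain ⟨p, _, hfp⟩ := Finset.mem_biUnion.mp hf
    exact (Finset.filter_subset _ _) hfp
  have hbig : (B.biUnion hit).card < S.card := by
    calc (B.biUnion hit).card ≤ ∑ p ∈ B, (hit p).card := Finset.card_biUnion_le
      _ ≤ ∑ _p ∈ B, m ^ (κ - 2) := Finset.sum_le_sum key
      _ = B.card * m ^ (κ - 2) := by rw [Finset.sum_const, smul_eq_mul]
      _ < m ^ 2 * m ^ (κ - 2) := by
          exact (Nat.mul_lt_mul_right (Nat.pow_pos hmpos)).mpr hBlt
      _ = m ^ κ := by rw [← pow_add]; congr 1; omega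
      _ = S.card := hcardS.symm
  obtain ⟨f, hfS, hfnot⟩ : ∃ f ∈ S, f ∉ B.biUnion hit := by
    by_contra hcon
    push_neg at hcon
    exact absurd (Finset.card_le_card (fun f hf => hcon f hf)) (not_le.mpr hbig)
  refine ⟨f, hmemS f hfS, fun i i' hne hmem => ?_⟩
  apply hfnot
  rw [Finset.mem_biUnion]
  exact ⟨Sym2.mk (f i) (f i'), hmem, Finset.mem_filter.mpr ⟨hfS, i, i', hne, rfl⟩⟩
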